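/- Let a, r ∈ ℝ with a² ≤ r² < 1, let P(u) = 1 − 2au + r²u², and for t ∈ ℝ set u = tanh(t/2) and f(t) = log P(u) − log(1−u²). Then f''(t) = ((1−u²)/2)·N(u)/P(u)², where N(u) = (1+r²−2a²) − 2a(1−r²)u + (2a²−r⁴−r²)u². In particular f''(t) > 0 for all t, so f is strictly convex on ℝ. -/

import Mathlib

noncomputable section

/-- P(u) = 1 − 2au + r²u². -/
def P (a r u : ℝ) : ℝ := 1 - 2 * a * u + r ^ 2 * u ^ 2

/-- N(u) = (1+r²−2a²) − 2a(1−r²)u + (2a²−r⁴−r²)u². -/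
def N (a r u : ℝ) : ℝ :=
  (1 + r ^ 2 - 2 * a ^ 2) - 2 * a * (1 - r ^ 2) * u + (2 * a ^ 2 - r ^ 4 - r ^ 2) * u ^ 2

/-- f(t) = log P(tanh(t/2)) − log(1 − tanh(t/2)²). -/
def f (a r t : ℝ) : ℝ :=
  Real.log (P a r (Real.tanh (t / 2))) - Real.log (1 - Real.tanh (t / 2) ^ 2)

lemma tanh_sq_lt_one (x : ℝ) : Real.tanh x ^ 2 < 1 := by
  have hc := Real.cosh_pos x
  have hsq : Real.cosh x ^ 2 = Real.sinh x ^ 2 + 1 := Real.cosh_sq x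
  rw [Real.tanh_eq_sinh_div_cosh, div_pow, div_lt_one (by positivity)]
  nlinarith

lemma hasDerivAt_tanh (x : ℝ) : HasDerivAt Real.tanh (1 - Real.tanh x ^ 2) x := by
  have hc : Real.cosh x ≠ 0 := (Real.cosh_pos x).ne'
  have h : HasDerivAt (fun y => Real.sinh y / Real.cosh y)
      ((Real.cosh x * Real.cosh x - Real.sinh x * Real.sinh x) / Real.cosh x ^ 2) x :=
    (Real.hasDerivAt_sinh x).div (Real.hasDerivAt_cosh x) hc
  have heq : (∀ y, Real.sinh y / Real.cosh y = Real.tanh y) := fun y =>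
    (Real.tanh_eq_sinh_div_cosh y).symm
  have h2 : HasDerivAt Real.tanh
      ((Real.cosh x * Real.cosh x - Real.sinh x * Real.sinh x) / Real.cosh x ^ 2) x := by
    simpa [funext heq] using h
  convert h2 using 1
  rw [Real.tanh_eq_sinh_div_cosh]
  have hsq : Real.cosh x ^ 2 = Real.sinh x ^ 2 + 1 := Real.cosh_sq x
  field_simp

/-- derivative of u(t) = tanh(t/2). -/
lemma hasDerivAt_u (t : ℝ) :
    HasDerivAt (fun s => Real.tanh (s / 2)) ((1 - Real.tanh (t / 2) ^ 2) / 2) t := by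
  have h := (hasDerivAt_tanh (t / 2)).comp t ((hasDerivAt_id t).div_const 2)
  simpa [mul_comm, div_eq_mul_inv, Function.comp_def] using h

lemma P_pos {a r : ℝ} (har : a ^ 2 ≤ r ^ 2) (hr : r ^ 2 < 1) {u : ℝ} (hu : u ^ 2 < 1) :
    0 < P a r u := by
  have h1 : a ^ 2 * u ^ 2 < 1 := by nlinarith [sq_nonneg u, sq_nonneg a]
  have h2 : (r ^ 2 - a ^ 2) * u ^ 2 ≥ 0 :=
    mul_nonneg (by linarith) (sq_nonneg u)
  unfold P
  nlinarith [sq_nonneg (1 - a * u)]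

lemma N_pos {a r : ℝ} (har : a ^ 2 ≤ r ^ 2) (hr : r ^ 2 < 1) {u : ℝ} (hu : u ^ 2 < 1) :
    0 < N a r u := by
  unfold N
  nlinarith [mul_nonneg (by linarith : (0:ℝ) ≤ 1 - r ^ 2) (sq_nonneg (u - a)),
    mul_nonneg (by linarith : (0:ℝ) ≤ 1 - r ^ 2) (by linarith : (0:ℝ) ≤ r ^ 2 - a ^ 2),
    mul_pos (by linarith : (0:ℝ) < 1 - u ^ 2)
      (pow_pos (by linarith : (0:ℝ) < 1 - r ^ 2) 2),
    mul_nonneg (by linarith : (0:ℝ) ≤ 1 - u ^ 2) (by linarith : (0:ℝ) ≤ r ^ 2 - a ^ 2)]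

/-- first derivative function -/
def g (a r t : ℝ) : ℝ :=
  (1 - Real.tanh (t / 2) ^ 2) * (r ^ 2 * Real.tanh (t / 2) - a) / P a r (Real.tanh (t / 2))
    + Real.tanh (t / 2)

lemma key_alg1 (a r u : ℝ) (hP : P a r u ≠ 0) (hu : 1 - u ^ 2 ≠ 0) :
    (1 - u ^ 2) * (r ^ 2 * u - a) / P a r u + u
      = (-(2 * a) + r ^ 2 * (2 * u)) * ((1 - u ^ 2) / 2) / P a r u
        - -(2 * u * ((1 - u ^ 2) / 2)) / (1 - u ^ 2) := by
  unfold P at *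
  field_simp
  ring

lemma key_alg2 (a r u : ℝ) (hP : P a r u ≠ 0) :
    (1 - u ^ 2) / 2 * N a r u / P a r u ^ 2
      = ((-(2 * u) * (r ^ 2 * u - a) + (1 - u ^ 2) * r ^ 2) * P a r u
          - (1 - u ^ 2) * (r ^ 2 * u - a) * (-(2 * a) + r ^ 2 * (2 * u))) / P a r u ^ 2
          * ((1 - u ^ 2) / 2)
        + (1 - u ^ 2) / 2 := by
  field_simp
  unfold P N
  ring

lemma hasDerivAt_f (a r : ℝ) (har : a ^ 2 ≤ r ^ 2) (hr : r ^ 2 < 1) (t : ℝ) :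
    HasDerivAt (f a r) (g a r t) t := by
  have hu2 : Real.tanh (t / 2) ^ 2 < 1 := tanh_sq_lt_one _
  have hP : 0 < P a r (Real.tanh (t / 2)) := P_pos har hr hu2
  have hu : HasDerivAt (fun s => Real.tanh (s / 2))
      ((1 - Real.tanh (t / 2) ^ 2) / 2) t := hasDerivAt_u t
  have hPu : HasDerivAt (fun v : ℝ => P a r v)
      (-(2 * a) + r ^ 2 * (2 * Real.tanh (t / 2))) (Real.tanh (t / 2)) := by
    have := (((hasDerivAt_id (Real.tanh (t / 2))).const_mul (2 * a)).const_sub 1).add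
      (((hasDerivAt_pow 2 (Real.tanh (t / 2)))).const_mul (r ^ 2))
    simpa [P, mul_comm, mul_assoc, sub_eq_add_neg, add_comm, add_assoc, pow_one, Pi.add_def] using this
  have hPt : HasDerivAt (fun s => P a r (Real.tanh (s / 2)))
      ((-(2 * a) + r ^ 2 * (2 * Real.tanh (t / 2)))
        * ((1 - Real.tanh (t / 2) ^ 2) / 2)) t := by
      have h := hPu.comp t hu; exact h
  have hQt : HasDerivAt (fun s => 1 - Real.tanh (s / 2) ^ 2)
      (-(2 * Real.tanh (t / 2) * ((1 - Real.tanh (t / 2) ^ 2) / 2))) t := by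
    have h2 : HasDerivAt (fun s => Real.tanh (s / 2) ^ 2)
        (2 * Real.tanh (t / 2) ^ 1 * ((1 - Real.tanh (t / 2) ^ 2) / 2)) t :=
      by have h := (hasDerivAt_pow 2 (Real.tanh (t / 2))).comp t hu; exact h
    simpa [pow_one, mul_assoc] using h2.const_sub 1
  have hlog1 := hPt.log hP.ne'
  have hlog2 := hQt.log (by nlinarith : (1 : ℝ) - Real.tanh (t / 2) ^ 2 ≠ 0)
  have hsub := hlog1.sub hlog2
  have hval := key_alg1 a r (Real.tanh (t / 2)) hP.ne' (by nlinarith)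
  unfold f g
  rw [hval]
  exact hsub

lemma hasDerivAt_g (a r : ℝ) (har : a ^ 2 ≤ r ^ 2) (hr : r ^ 2 < 1) (t : ℝ) :
    HasDerivAt (g a r)
      (((1 - Real.tanh (t / 2) ^ 2) / 2) * N a r (Real.tanh (t / 2))
        / P a r (Real.tanh (t / 2)) ^ 2) t := by
  have hu2 : Real.tanh (t / 2) ^ 2 < 1 := tanh_sq_lt_one _
  have hP : 0 < P a r (Real.tanh (t / 2)) := P_pos har hr hu2
  have hu : HasDerivAt (fun s => Real.tanh (s / 2))
      ((1 - Real.tanh (t / 2) ^ 2) / 2) t := hasDerivAt_u t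
  have hNum : HasDerivAt (fun v : ℝ => (1 - v ^ 2) * (r ^ 2 * v - a))
      ((-(2 * Real.tanh (t / 2))) * (r ^ 2 * Real.tanh (t / 2) - a)
        + (1 - Real.tanh (t / 2) ^ 2) * r ^ 2) (Real.tanh (t / 2)) := by
    have h1 : HasDerivAt (fun v : ℝ => 1 - v ^ 2) (-(2 * Real.tanh (t / 2)))
        (Real.tanh (t / 2)) := by
      simpa [pow_one] using (hasDerivAt_pow 2 (Real.tanh (t / 2))).const_sub 1
    have h2 : HasDerivAt (fun v : ℝ => r ^ 2 * v - a) (r ^ 2) (Real.tanh (t / 2)) := by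
      simpa using ((hasDerivAt_id (Real.tanh (t / 2))).const_mul (r ^ 2)).sub_const a
    simpa [Pi.mul_def] using h1.mul h2
  have hPu : HasDerivAt (fun v : ℝ => P a r v)
      (-(2 * a) + r ^ 2 * (2 * Real.tanh (t / 2))) (Real.tanh (t / 2)) := by
    have := (((hasDerivAt_id (Real.tanh (t / 2))).const_mul (2 * a)).const_sub 1).add
      (((hasDerivAt_pow 2 (Real.tanh (t / 2)))).const_mul (r ^ 2))
    simpa [P, mul_comm, mul_assoc, sub_eq_add_neg, add_comm, add_assoc, pow_one, Pi.add_def] using this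
  have hdiv := hNum.div hPu hP.ne'
  have hcomp := hdiv.comp t hu
  have hg := hcomp.add hu
  have hval := key_alg2 a r (Real.tanh (t / 2)) hP.ne'
  unfold g
  rw [hval]
  exact hg

theorem second_derivative_formula (a r : ℝ) (har : a ^ 2 ≤ r ^ 2) (hr : r ^ 2 < 1) :
    (∀ t : ℝ, deriv (deriv (f a r)) t
        = ((1 - Real.tanh (t / 2) ^ 2) / 2) * N a r (Real.tanh (t / 2))
            / P a r (Real.tanh (t / 2)) ^ 2) ∧
    (∀ t : ℝ, 0 < deriv (deriv (f a r)) t) ∧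
    StrictConvexOn ℝ Set.univ (f a r) := by
  have hderiv : deriv (f a r) = g a r :=
    funext fun t => (hasDerivAt_f a r har hr t).deriv
  have hkey : ∀ t : ℝ, deriv (deriv (f a r)) t
      = ((1 - Real.tanh (t / 2) ^ 2) / 2) * N a r (Real.tanh (t / 2))
          / P a r (Real.tanh (t / 2)) ^ 2 := by
    intro t
    rw [hderiv]
    exact (hasDerivAt_g a r har hr t).deriv
  have hpos : ∀ t : ℝ, 0 < deriv (deriv (f a r)) t := by
    intro t
    rw [hkey t]
    have hu2 : Real.tanh (t / 2) ^ 2 < 1 := tanh_sq_lt_one _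
    have hP := P_pos har hr hu2
    have hN := N_pos har hr hu2
    exact div_pos (mul_pos (by linarith) hN) (pow_pos hP 2)
  refine ⟨hkey, hpos, ?_⟩
  apply strictConvexOn_of_deriv2_pos convex_univ
  · exact (Differentiable.continuous
      (fun t => (hasDerivAt_f a r har hr t).differentiableAt)).continuousOn
  · intro x _
    simpa [Function.iterate_succ_apply'] using hpos x
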